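/- arXiv:1404.4768 — 5 statements merged into one kernel-verified Lean document; each statement's English description precedes it below -/
import Mathlib

section
/- Let I be a complex interval with 2^{-ν} ≤ |z| ≤ 2^τ for all z ∈ I. Then width({1/z : z ∈ I}) ≤ 2^{4ν + 2τ + 3} · width(I). -/
theorem stmt5 (ν τ : ℤ) (I : Set ℂ)
    (hI : ∀ z ∈ I, (2 : ℝ) ^ (-ν) ≤ ‖z‖ ∧ ‖z‖ ≤ (2 : ℝ) ^ τ) :
    Metric.diam ((fun z => z⁻¹) '' I) ≤ (2 : ℝ) ^ (4 * ν + 2 * τ + 3) * Metric.diam I := by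
  rcases Set.eq_empty_or_nonempty I with rfl | ⟨z₀, hz₀⟩
  · simp only [Set.image_empty, Metric.diam_empty]
    positivity
  -- from nonemptiness, -ν ≤ τ
  have hντ : -ν ≤ τ := by
    have h := hI z₀ hz₀
    have : (2 : ℝ) ^ (-ν) ≤ (2 : ℝ) ^ τ := h.1.trans h.2
    exact le_of_not_gt fun hlt => absurd this (not_le.mpr (zpow_lt_zpow_right₀ one_lt_two hlt))
  have hpow : (2 : ℝ) ^ (2 * ν) ≤ (2 : ℝ) ^ (4 * ν + 2 * τ + 3) := by
    apply zpow_le_zpow_right₀ one_le_two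
    linarith
  have hbdd : Bornology.IsBounded I := by
    apply (Metric.isBounded_closedBall (x := (0 : ℂ)) (r := (2 : ℝ) ^ τ)).subset
    intro z hz
    simpa [Complex.dist_eq] using (hI z hz).2
  have hνpos : (0 : ℝ) < (2 : ℝ) ^ (-ν) := by positivity
  apply Metric.diam_le_of_forall_dist_le
  · have := Metric.diam_nonneg (s := I) (α := ℂ)
    positivity
  rintro x ⟨z, hz, rfl⟩ y ⟨w, hw, rfl⟩
  have hz0 : z ≠ 0 := by
    intro h
    have := lt_of_lt_of_le hνpos (hI z hz).1
    rw [h] at this; simpa using this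
  have hw0 : w ≠ 0 := by
    intro h
    have := lt_of_lt_of_le hνpos (hI w hw).1
    rw [h] at this; simpa using this
  have hzpos : (0 : ℝ) < ‖z‖ := norm_pos_iff.mpr hz0
  have hwpos : (0 : ℝ) < ‖w‖ := norm_pos_iff.mpr hw0
  have key : dist z⁻¹ w⁻¹ = ‖w - z‖ / (‖z‖ * ‖w‖) := by
    rw [Complex.dist_eq, ← norm_mul, ← norm_div]
    congr 1
    field_simp
  rw [key]
  have h1 : ‖w - z‖ ≤ Metric.diam I := by
    have := Metric.dist_le_diam_of_mem hbdd hw hz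
    simpa [Complex.dist_eq] using this
  have h2 : (1 : ℝ) / (‖z‖ * ‖w‖) ≤ (2 : ℝ) ^ (2 * ν) := by
    rw [div_le_iff₀ (by positivity)]
    have : (2 : ℝ) ^ (2 * ν) * ((2 : ℝ) ^ (-ν) * (2 : ℝ) ^ (-ν)) = 1 := by
      rw [← zpow_add₀ (two_ne_zero), ← zpow_add₀ (two_ne_zero)]
      · have h0 : 2 * ν + (-ν + -ν) = 0 := by ring
        rw [h0, zpow_zero]
      all_goals norm_num
    calc (1 : ℝ) = (2 : ℝ) ^ (2 * ν) * ((2 : ℝ) ^ (-ν) * (2 : ℝ) ^ (-ν)) := this.symm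
      _ ≤ (2 : ℝ) ^ (2 * ν) * (‖z‖ * ‖w‖) := by
          apply mul_le_mul_of_nonneg_left _ (by positivity)
          exact mul_le_mul (hI z hz).1 (hI w hw).1 (le_of_lt hνpos) (le_of_lt hzpos)
  calc ‖w - z‖ / (‖z‖ * ‖w‖)
      = ‖w - z‖ * (1 / (‖z‖ * ‖w‖)) := by ring
    _ ≤ Metric.diam I * (2 : ℝ) ^ (2 * ν) := by
        apply mul_le_mul h1 h2 (by positivity) Metric.diam_nonneg
    _ ≤ Metric.diam I * (2 : ℝ) ^ (4 * ν + 2 * τ + 3) := by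
        exact mul_le_mul_of_nonneg_left hpow Metric.diam_nonneg
    _ = (2 : ℝ) ^ (4 * ν + 2 * τ + 3) * Metric.diam I := by ring
end

section
/- Let F, G ∈ ℂ[x] with deg F = m ≥ n = deg G ≥ 1, G monic, and suppose every complex root of G has modulus at most 2^ρ. Write F = G·Q + R with deg Q = m−n and deg R < n. Then ‖Q‖_∞ ≤ 2^{m + log₂ m + mρ} · ‖F‖_∞. -/
open Polynomial
open Finset


lemma divByMonic_mul {p q r : Polynomial ℂ} (hq : q.Monic) (hr : r.Monic) :
    p /ₘ (q * r) = p /ₘ q /ₘ r := by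
  refine (div_modByMonic_unique (p /ₘ q /ₘ r) (q * ((p /ₘ q) %ₘ r) + p %ₘ q) (hq.mul hr)
    ⟨?_, ?_⟩).1
  · have h1 := modByMonic_add_div p q
    have h2 := modByMonic_add_div (p /ₘ q) r
    calc q * ((p /ₘ q) %ₘ r) + p %ₘ q + q * r * (p /ₘ q /ₘ r)
        = p %ₘ q + q * ((p /ₘ q) %ₘ r + r * (p /ₘ q /ₘ r)) := by ring
      _ = p := by rw [h2, h1]
  · have hdq : q.degree ≠ ⊥ := by simp [hq.ne_zero]
    have hdr0 : (0 : WithBot ℕ) ≤ r.degree := by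
      rw [zero_le_degree_iff]; exact hr.ne_zero
    refine lt_of_le_of_lt (degree_add_le _ _) (max_lt ?_ ?_)
    · refine lt_of_le_of_lt (degree_mul_le _ _) ?_
      rw [degree_mul]
      exact WithBot.add_lt_add_left hdq (degree_modByMonic_lt _ hr)
    · refine lt_of_lt_of_le (degree_modByMonic_lt _ hq) ?_
      rw [degree_mul]
      calc q.degree = q.degree + 0 := (add_zero _).symm
        _ ≤ q.degree + r.degree := add_le_add le_rfl hdr0

lemma sum_choose_le' (m n j : ℕ) :
    ∑ i ∈ Icc (j+1) (m - n), (m - i).choose n ≤ (m - j).choose (n+1) := by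
  rcases le_or_gt (j + 1) (m - n) with h | h
  · have h1 : m - j - 1 + 1 = m - j := by omega
    rw [← h1, ← Nat.sum_Icc_choose]
    apply le_of_eq
    refine Finset.sum_nbij' (fun i => m - i) (fun t => m - t) ?_ ?_ ?_ ?_ ?_ <;>
      intros <;> simp_all [Finset.mem_Icc] <;> omega
  · rw [Finset.Icc_eq_empty (by omega)]
    simp

lemma aux_bound (B : ℝ) (hB : 1 ≤ B) (MF : ℝ) (F : Polynomial ℂ)
    (hMF : ∀ i, ‖F.coeff i‖ ≤ MF)
    (s : Multiset ℂ) (hs : ∀ z ∈ s, ‖z‖ ≤ B) :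
    ∀ j, ‖(F /ₘ (s.map (fun a => X - C a)).prod).coeff j‖ ≤
      MF * ((F.natDegree - j).choose (Multiset.card s)) *
        B ^ (F.natDegree - Multiset.card s - j) := by
  have hMF0 : 0 ≤ MF := le_trans (norm_nonneg _) (hMF 0)
  have hB0 : 0 ≤ B := le_trans zero_le_one hB
  revert hs
  induction s using Multiset.induction with
  | empty =>
    intro _ j
    simp only [Multiset.map_zero, Multiset.prod_zero, divByMonic_one, Multiset.card_zero,
      Nat.choose_zero_right, Nat.cast_one, mul_one, Nat.sub_zero]
    calc ‖F.coeff j‖ ≤ MF := hMF j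
      _ ≤ MF * B ^ (F.natDegree - j) := by
        nth_rewrite 1 [← mul_one MF]
        exact mul_le_mul_of_nonneg_left (one_le_pow₀ hB) hMF0
  | cons a s ih =>
    intro hs j
    have ha : ‖a‖ ≤ B := hs a (Multiset.mem_cons_self a s)
    have hs' : ∀ z ∈ s, ‖z‖ ≤ B := fun z hz => hs z (Multiset.mem_cons_of_mem hz)
    have hP : ((s.map (fun a => X - C a)).prod).Monic :=
      monic_multiset_prod_of_monic _ _ (fun z _ => monic_X_sub_C z)
    set m := F.natDegree with hm
    set k := Multiset.card s with hk
    have hPdeg : ((s.map (fun a => X - C a)).prod).natDegree = k := by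
      rw [natDegree_multiset_prod_of_monic _ (fun z hz => by
        simp only [Multiset.mem_map] at hz; obtain ⟨w, _, rfl⟩ := hz; exact monic_X_sub_C w)]
      simp [Multiset.map_map, Function.comp, hk]
    have hdiv : F /ₘ ((a ::ₘ s).map (fun a => X - C a)).prod
        = (F /ₘ (s.map (fun a => X - C a)).prod) /ₘ (X - C a) := by
      rw [Multiset.map_cons, Multiset.prod_cons, mul_comm]
      exact divByMonic_mul hP (monic_X_sub_C a)
    set Q := F /ₘ (s.map (fun a => X - C a)).prod with hQ
    have hQdeg : Q.natDegree = m - k := by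
      rw [hQ, natDegree_divByMonic F hP, hPdeg]
    rw [hdiv, coeff_divByMonic_X_sub_C, hQdeg, Multiset.card_cons]
    calc ‖∑ i ∈ Icc (j+1) (m - k), a ^ (i - (j+1)) * Q.coeff i‖
        ≤ ∑ i ∈ Icc (j+1) (m - k), ‖a ^ (i - (j+1)) * Q.coeff i‖ :=
          norm_sum_le _ _
      _ ≤ ∑ i ∈ Icc (j+1) (m - k), MF * ((m - i).choose k : ℝ) * B ^ (m - k - (j+1)) := by
          apply Finset.sum_le_sum
          intro i hi
          rw [Finset.mem_Icc] at hi
          rw [norm_mul, norm_pow]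
          have h1 : ‖a‖ ^ (i - (j+1)) ≤ B ^ (i - (j+1)) :=
            pow_le_pow_left₀ (norm_nonneg a) ha _
          have h2 := ih hs' i
          calc ‖a‖ ^ (i - (j+1)) * ‖Q.coeff i‖
              ≤ B ^ (i - (j+1)) * (MF * ((m - i).choose k : ℝ) * B ^ (m - k - i)) :=
                mul_le_mul h1 h2 (norm_nonneg _) (by positivity)
            _ = MF * ((m - i).choose k : ℝ) * (B ^ (i - (j+1)) * B ^ (m - k - i)) := by ring
            _ = MF * ((m - i).choose k : ℝ) * B ^ (m - k - (j+1)) := by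
                obtain ⟨hi1, hi2⟩ := hi
                have hij : i - (j+1) + (m - k - i) = m - k - (j+1) := by omega
                rw [← pow_add, hij]
      _ = MF * B ^ (m - k - (j+1)) * ∑ i ∈ Icc (j+1) (m - k), ((m - i).choose k : ℝ) := by
          rw [Finset.mul_sum]
          apply Finset.sum_congr rfl
          intro i _
          ring
      _ ≤ MF * B ^ (m - k - (j+1)) * ((m - j).choose (k+1) : ℝ) := by
          apply mul_le_mul_of_nonneg_left _ (by positivity)
          rw [← Nat.cast_sum]
          exact_mod_cast sum_choose_le' m k j
      _ = MF * ((m - j).choose (k+1) : ℝ) * B ^ (m - (k+1) - j) := by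
          rw [show m - k - (j+1) = m - (k+1) - j by omega]
          ring




lemma choose_le_two_pow' (a b : ℕ) : a.choose b ≤ 2 ^ a := by
  rcases le_or_gt b a with h | h
  · calc a.choose b ≤ ∑ i ∈ range (a+1), a.choose i :=
        Finset.single_le_sum (fun i _ => Nat.zero_le _) (Finset.mem_range.2 (by omega))
      _ = 2 ^ a := Nat.sum_range_choose a
  · rw [Nat.choose_eq_zero_of_lt h]; exact Nat.zero_le _

theorem stmt6 (m n : ℕ) (ρ : ℝ) (hρ : 0 ≤ ρ) (F G : Polynomial ℂ)
    (hG : G.Monic) (hFdeg : F.natDegree = m) (hGdeg : G.natDegree = n)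
    (hn : 1 ≤ n) (hnm : n ≤ m)
    (hroots : ∀ z : ℂ, G.eval z = 0 → ‖z‖ ≤ (2 : ℝ) ^ ρ)
    (MF : ℝ) (hMF : ∀ i, ‖F.coeff i‖ ≤ MF) :
    ∀ i, ‖(F /ₘ G).coeff i‖ ≤
      2 ^ ((m : ℝ) + Real.logb 2 m + m * ρ) * MF := by
  intro i
  have hMF0 : 0 ≤ MF := le_trans (norm_nonneg _) (hMF 0)
  set B : ℝ := (2 : ℝ) ^ ρ with hBdef
  have hB : 1 ≤ B := by
    rw [hBdef, show (1:ℝ) = (2:ℝ) ^ (0:ℝ) from (Real.rpow_zero 2).symm]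
    exact Real.rpow_le_rpow_of_exponent_le one_le_two hρ
  have hsplit : Splits G := IsAlgClosed.splits G
  have hGeq : G = (G.roots.map fun a => X - C a).prod :=
    hsplit.eq_prod_roots_of_monic hG
  have hcard : Multiset.card G.roots = n := by
    rw [← hGdeg]
    exact (Polynomial.splits_iff_card_roots.1 hsplit)
  have hroots' : ∀ z ∈ G.roots, ‖z‖ ≤ B := by
    intro z hz
    exact hroots z ((Polynomial.mem_roots'.1 hz).2)
  have key := aux_bound B hB MF F hMF G.roots hroots' i
  rw [← hGeq, hFdeg, hcard] at key
  refine le_trans key ?_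
  -- RHS simplification
  have hm1 : 1 ≤ m := le_trans hn hnm
  have hm0 : (0 : ℝ) < m := by exact_mod_cast hm1
  have hrhs : (2:ℝ) ^ ((m : ℝ) + Real.logb 2 m + m * ρ)
      = 2 ^ (m:ℝ) * (m : ℝ) * 2 ^ ((m:ℝ) * ρ) := by
    rw [Real.rpow_add two_pos, Real.rpow_add two_pos,
      Real.rpow_logb two_pos (by norm_num) hm0]
  rw [hrhs]
  have h1 : ((m - i).choose n : ℝ) ≤ 2 ^ (m:ℝ) := by
    rw [show (2:ℝ) ^ (m:ℝ) = ((2^m : ℕ) : ℝ) by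
      rw [Real.rpow_natCast]; push_cast; ring]
    exact_mod_cast le_trans (choose_le_two_pow' (m - i) n)
      (Nat.pow_le_pow_right (by norm_num) (Nat.sub_le m i))
  have h2 : B ^ (m - n - i) ≤ 2 ^ ((m:ℝ) * ρ) := by
    rw [hBdef, ← Real.rpow_natCast ((2:ℝ)^ρ) (m - n - i), ← Real.rpow_mul (by norm_num)]
    apply Real.rpow_le_rpow_of_exponent_le one_le_two
    rw [mul_comm (m:ℝ) ρ]
    apply mul_le_mul_of_nonneg_left _ hρ
    exact_mod_cast Nat.sub_le _ i |>.trans (Nat.sub_le m n)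
  have hc0 : (0:ℝ) ≤ ((m - i).choose n : ℝ) := Nat.cast_nonneg _
  have hB0 : (0:ℝ) ≤ B := le_trans zero_le_one hB
  calc MF * ((m - i).choose n : ℝ) * B ^ (m - n - i)
      ≤ MF * (2 ^ (m:ℝ)) * (2 ^ ((m:ℝ) * ρ)) := by
        apply mul_le_mul
        · exact mul_le_mul_of_nonneg_left h1 hMF0
        · exact h2
        · positivity
        · positivity
    _ ≤ 2 ^ (m:ℝ) * (m : ℝ) * 2 ^ ((m:ℝ) * ρ) * MF := by
        have h3 : (1:ℝ) ≤ (m:ℝ) := by exact_mod_cast hm1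
        have h4 : (0:ℝ) ≤ 2 ^ ((m:ℝ)) * 2 ^ ((m:ℝ) * ρ) * MF := by positivity
        nlinarith [mul_le_mul_of_nonneg_left h3 h4]
end

section
/- Let F, G ∈ ℂ[x] with deg F = m ≥ n = deg G ≥ 1, G monic, and suppose every complex root of G has modulus at most 2^ρ. Write F = G·Q + R with deg R < n. Then ‖R‖_∞ ≤ 2^{m + n + log₂ m + mρ} · ‖F‖_∞. -/
open Polynomial Finset

private lemma abs_sub_le'' (x y : ℂ) : ‖x - y‖ ≤ ‖x‖ + ‖y‖ := by
  simpa [sub_eq_add_neg] using norm_add_le x (-y)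

private lemma divByMonic_mul_comp (P q r : Polynomial ℂ) (hq : q.Monic) (hr : r.Monic) :
    P /ₘ (q * r) = (P /ₘ q) /ₘ r := by
  have h := div_modByMonic_unique (f := P) ((P /ₘ q) /ₘ r)
      (q * ((P /ₘ q) %ₘ r) + P %ₘ q) (hq.mul hr) ?_
  · exact h.1
  constructor
  · calc q * ((P /ₘ q) %ₘ r) + P %ₘ q + q * r * ((P /ₘ q) /ₘ r)
        = q * ((P /ₘ q) %ₘ r + r * ((P /ₘ q) /ₘ r)) + P %ₘ q := by ring
      _ = P := by rw [modByMonic_add_div _ r, add_comm, modByMonic_add_div _ q]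
  · have h1 : degree (q * ((P /ₘ q) %ₘ r)) < degree (q * r) := by
      rw [degree_mul, degree_mul]
      exact WithBot.add_lt_add_left (by simp [hq.ne_zero, degree_eq_natDegree])
        (degree_modByMonic_lt _ hr)
    have h2 : degree (P %ₘ q) < degree (q * r) := by
      refine lt_of_lt_of_le (degree_modByMonic_lt _ hq) ?_
      rw [degree_mul]
      have h0 : (0 : WithBot ℕ) ≤ degree r := by
        rw [degree_eq_natDegree hr.ne_zero]; exact_mod_cast Nat.zero_le _
      calc degree q = degree q + 0 := by simp
        _ ≤ degree q + degree r := by gcongr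
    exact lt_of_le_of_lt (degree_add_le _ _) (max_lt h1 h2)
private lemma prodBound (B : ℝ) (hB : 1 ≤ B) (t : Multiset ℂ) :
    (∀ a ∈ t, ‖a‖ ≤ B) → ∀ j : ℕ,
      ‖((t.map fun a => X - C a).prod).coeff j‖
        ≤ (t.card.choose j : ℝ) * B ^ (t.card - j) := by
  have hB0 : (0:ℝ) ≤ B := le_trans zero_le_one hB
  induction t using Multiset.induction_on with
  | empty =>
    intro _ j
    rcases j with _ | j
    · simp
    · simp [coeff_one]
  | cons a s ih =>
    intro ht j
    have ha : ‖a‖ ≤ B := ht a (Multiset.mem_cons_self a s)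
    have ihs := ih (fun x hx => ht x (Multiset.mem_cons_of_mem hx))
    rw [Multiset.map_cons, Multiset.prod_cons]
    set P := (s.map fun a => X - C a).prod with hP
    set c := Multiset.card s with hc
    have hexp : ∀ j : ℕ, ((X - C a) * P).coeff j
        = (X * P).coeff j - a * P.coeff j := by
      intro j; rw [sub_mul, coeff_sub, coeff_C_mul]
    have hcard : Multiset.card (a ::ₘ s) = c + 1 := by simp [hc]
    rw [hcard]
    rcases j with _ | j
    · rw [hexp 0]
      have h0 : (X * P).coeff 0 = 0 := by simp
      rw [h0, zero_sub, norm_neg]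
      calc ‖a * P.coeff 0‖ = ‖a‖ * ‖P.coeff 0‖ := norm_mul _ _
        _ ≤ B * ((c.choose 0 : ℝ) * B ^ (c - 0)) :=
            mul_le_mul ha (ihs 0) (norm_nonneg _) hB0
        _ ≤ ((c+1).choose 0 : ℝ) * B ^ (c + 1 - 0) := by
            simp [pow_succ, mul_comm]
    · rw [hexp (j+1), coeff_X_mul]
      calc ‖P.coeff j - a * P.coeff (j+1)‖
          ≤ ‖P.coeff j‖ + ‖a‖ * ‖P.coeff (j+1)‖ := by
            simpa [norm_mul] using abs_sub_le'' (P.coeff j) (a * P.coeff (j+1))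
        _ ≤ (c.choose j : ℝ) * B ^ (c - j) + B * ((c.choose (j+1) : ℝ) * B ^ (c - (j+1))) :=
            add_le_add (ihs j) (mul_le_mul ha (ihs (j+1)) (norm_nonneg _) hB0)
        _ ≤ ((c+1).choose (j+1) : ℝ) * B ^ (c + 1 - (j+1)) := by
            rw [Nat.succ_sub_succ, Nat.choose_succ_succ' ]
            push_cast
            rw [add_mul]
            refine add_le_add le_rfl ?_
            rcases Nat.lt_or_ge j c with h | h
            · have he : c - j = (c - (j+1)) + 1 := by omega
              rw [he, pow_succ]
              ring_nf
              exact le_rfl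
            · have h1 : c.choose (j+1) = 0 := Nat.choose_eq_zero_of_lt (by omega)
              simp [h1]
private lemma stepBound (B M : ℝ) (hB : 1 ≤ B) (hM : 0 ≤ M) (m k : ℕ) (a : ℂ)
    (ha : ‖a‖ ≤ B) (P : Polynomial ℂ) (hdeg : P.natDegree ≤ m - k)
    (hcoeff : ∀ j, ‖P.coeff j‖ ≤ M * ((m - j).choose k : ℝ) * B ^ (m - k - j)) :
    (P /ₘ (X - C a)).natDegree ≤ m - (k+1) ∧
    ∀ j, ‖(P /ₘ (X - C a)).coeff j‖
      ≤ M * ((m - j).choose (k+1) : ℝ) * B ^ (m - (k+1) - j) := by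
  have hB0 : (0:ℝ) ≤ B := le_trans zero_le_one hB
  have hma : Monic (X - C a) := monic_X_sub_C a
  set Q := P /ₘ (X - C a) with hQ
  have hRHS0 : ∀ j : ℕ, (0:ℝ) ≤ M * ((m - j).choose (k+1) : ℝ) * B ^ (m - (k+1) - j) := by
    intro j; positivity
  by_cases hmk : m - k = 0
  · -- P is a constant, Q = 0
    have hQ0 : Q = 0 := by
      rw [hQ, divByMonic_eq_zero_iff hma]
      have hd0 : degree P ≤ (0:ℕ) := degree_le_of_natDegree_le (by omega)
      calc degree P ≤ ((0:ℕ) : WithBot ℕ) := hd0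
        _ < degree (X - C a) := by rw [degree_X_sub_C]; norm_num
    constructor
    · simp [hQ0]
    · intro j; simpa [hQ0] using hRHS0 j
  · have hdQ : Q.natDegree ≤ m - (k+1) := by
      rw [hQ, natDegree_divByMonic P hma, natDegree_X_sub_C]
      omega
    refine ⟨hdQ, ?_⟩
    -- recursion q_j = p_{j+1} + a * q_{j+1}
    have hrec : ∀ j : ℕ, Q.coeff j = P.coeff (j+1) + a * Q.coeff (j+1) := by
      intro j
      have hPdecomp : P = (X - C a) * Q + C (P.eval a) := by
        conv_lhs => rw [← modByMonic_add_div P (X - C a)]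
        rw [modByMonic_X_sub_C_eq_C_eval]
        ring
      have := congrArg (fun p => Polynomial.coeff p (j+1)) hPdecomp
      simp only [coeff_add, coeff_C, sub_mul, coeff_sub, coeff_C_mul, coeff_X_mul] at this
      rw [if_neg (Nat.succ_ne_zero j)] at this
      -- this : P.coeff (j+1) = Q.coeff j - a * Q.coeff (j+1) + 0
      rw [this]; ring
    have key : ∀ s j : ℕ, m - k ≤ j + s →
        ‖Q.coeff j‖ ≤ M * ((m - j).choose (k+1) : ℝ) * B ^ (m - (k+1) - j) := by
      intro s
      induction s with
      | zero =>
        intro j hj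
        have : Q.coeff j = 0 := by
          apply coeff_eq_zero_of_natDegree_lt
          omega
        rw [this, norm_zero]
        exact hRHS0 j
      | succ s ih =>
        intro j hj
        rcases Nat.lt_or_ge (j + s) (m - k) with h | h
        · -- use recursion
          have hj1 : m - k ≤ (j+1) + s := by omega
          have h1 : ‖Q.coeff j‖
              ≤ ‖P.coeff (j+1)‖ + B * ‖Q.coeff (j+1)‖ := by
            rw [hrec j]
            calc ‖P.coeff (j+1) + a * Q.coeff (j+1)‖
                ≤ ‖P.coeff (j+1)‖ + ‖a * Q.coeff (j+1)‖ :=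
                  norm_add_le _ _
              _ ≤ _ := by
                  rw [norm_mul]
                  gcongr
          refine h1.trans ?_
          have h2 := hcoeff (j+1)
          have h3 := ih (j+1) hj1
          calc ‖P.coeff (j+1)‖ + B * ‖Q.coeff (j+1)‖
              ≤ M * ((m - (j+1)).choose k : ℝ) * B ^ (m - k - (j+1))
                + B * (M * ((m - (j+1)).choose (k+1) : ℝ) * B ^ (m - (k+1) - (j+1))) := by
                gcongr
            _ ≤ M * ((m - j).choose (k+1) : ℝ) * B ^ (m - (k+1) - j) := by
                rcases Nat.lt_or_ge (j+1) (m - k) with hc | hc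
                · have e1 : m - k - (j+1) = m - (k+1) - j := by omega
                  have e2 : m - (k+1) - j = (m - (k+1) - (j+1)) + 1 := by omega
                  have e3 : (m - j).choose (k+1) = (m - (j+1)).choose k + (m - (j+1)).choose (k+1) := by
                    have : m - j = (m - (j+1)) + 1 := by omega
                    rw [this, Nat.choose_succ_succ' ]
                  rw [e1, e3]
                  push_cast
                  rw [e2, pow_succ]
                  ring_nf
                  exact le_rfl
                · -- j + 1 ≥ m - k : second binomial is zero, exponents collapse
                  have hz : (m - (j+1)).choose (k+1) = 0 :=
                    Nat.choose_eq_zero_of_lt (by omega)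
                  have hjlt : j + 1 = m - k := by omega
                  have e1 : m - k - (j+1) = 0 := by omega
                  have e4 : (m - j).choose (k+1) = (m - (j+1)).choose k + (m - (j+1)).choose (k+1) := by
                    have : m - j = (m - (j+1)) + 1 := by omega
                    rw [this, Nat.choose_succ_succ' ]
                  rw [hz, e1, e4, hz]
                  push_cast
                  simp only [pow_zero, mul_one, mul_zero, add_zero, zero_mul]
                  have : (1:ℝ) ≤ B ^ (m - (k+1) - j) := one_le_pow₀ hB
                  nlinarith [mul_nonneg hM (Nat.cast_nonneg ((m - (j+1)).choose k) : (0:ℝ) ≤ ((m - (j+1)).choose k : ℝ))]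
        · exact ih j h
    exact fun j => key (m - k) j (by omega)

private lemma multiBound (B M : ℝ) (hB : 1 ≤ B) (hM : 0 ≤ M) (m : ℕ) (t : Multiset ℂ) :
    (∀ a ∈ t, ‖a‖ ≤ B) → ∀ (k : ℕ) (P : Polynomial ℂ), P.natDegree ≤ m - k →
    (∀ j, ‖P.coeff j‖ ≤ M * ((m - j).choose k : ℝ) * B ^ (m - k - j)) →
    (P /ₘ (t.map fun a => X - C a).prod).natDegree ≤ m - (k + t.card) ∧
    ∀ j, ‖(P /ₘ (t.map fun a => X - C a).prod).coeff j‖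
      ≤ M * ((m - j).choose (k + t.card) : ℝ) * B ^ (m - (k + t.card) - j) := by
  induction t using Multiset.induction_on with
  | empty =>
    intro _ k P hdeg hcoeff
    simpa [divByMonic_one] using ⟨hdeg, hcoeff⟩
  | cons a s ih =>
    intro ht k P hdeg hcoeff
    have ha : ‖a‖ ≤ B := ht a (Multiset.mem_cons_self a s)
    have hts : ∀ x ∈ s, ‖x‖ ≤ B := fun x hx => ht x (Multiset.mem_cons_of_mem hx)
    have hmono : ((s.map fun a => X - C a).prod).Monic :=
      monic_multiset_prod_of_monic _ _ (fun x _ => monic_X_sub_C x)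
    have hsplit : P /ₘ ((a ::ₘ s).map fun a => X - C a).prod
        = (P /ₘ (X - C a)) /ₘ (s.map fun a => X - C a).prod := by
      rw [Multiset.map_cons, Multiset.prod_cons]
      exact divByMonic_mul_comp P _ _ (monic_X_sub_C a) hmono
    have hstep := stepBound B M hB hM m k a ha P hdeg hcoeff
    have hrest := ih hts (k+1) (P /ₘ (X - C a)) hstep.1 hstep.2
    have hcc : k + Multiset.card (a ::ₘ s) = (k + 1) + Multiset.card s := by
      rw [Multiset.card_cons]; omega
    rw [hsplit, hcc]
    exact hrest

private lemma sum_antidiag_choose_le (n i : ℕ) :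
    (∑ x ∈ antidiagonal i, n.choose x.1) ≤ 2 ^ n := by
  rw [Finset.Nat.sum_antidiagonal_eq_sum_range_succ_mk]
  calc ∑ k ∈ range (i+1), n.choose k
      ≤ ∑ k ∈ range (i+n+1), n.choose k :=
        Finset.sum_le_sum_of_subset (Finset.range_subset_range.2 (by omega))
    _ = ∑ k ∈ range (n+1), n.choose k := by
        refine (Finset.sum_subset (Finset.range_subset_range.2 (by omega)) ?_).symm
        intro x hx hnx
        simp only [Finset.mem_range] at hx hnx
        exact Nat.choose_eq_zero_of_lt (by omega)
    _ = 2 ^ n := Nat.sum_range_choose n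

private lemma one_add_choose_le (m n : ℕ) (h1 : 1 ≤ n) (h2 : n ≤ m) :
    1 + m.choose n ≤ 2 ^ m := by
  calc 1 + m.choose n = ∑ k ∈ ({0, n} : Finset ℕ), m.choose k := by
        rw [Finset.sum_pair (by omega : (0:ℕ) ≠ n)]
        simp
    _ ≤ ∑ k ∈ range (m+1), m.choose k := by
        apply Finset.sum_le_sum_of_subset
        intro x hx
        simp only [Finset.mem_insert, Finset.mem_singleton] at hx
        simp only [Finset.mem_range]
        omega
    _ = 2 ^ m := Nat.sum_range_choose m

theorem stmt7 (m n : ℕ) (ρ : ℝ) (hρ : 0 ≤ ρ) (F G : Polynomial ℂ)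
    (hG : G.Monic) (hFdeg : F.natDegree = m) (hGdeg : G.natDegree = n)
    (hn : 1 ≤ n) (hnm : n ≤ m)
    (hroots : ∀ z : ℂ, G.eval z = 0 → ‖z‖ ≤ (2 : ℝ) ^ ρ)
    (MF : ℝ) (hMF : ∀ i, ‖F.coeff i‖ ≤ MF) :
    ∀ i, ‖(F %ₘ G).coeff i‖ ≤
      2 ^ ((m : ℝ) + (n : ℝ) + Real.logb 2 m + m * ρ) * MF := by
  intro i
  set B : ℝ := (2:ℝ) ^ ρ with hBdef
  have hB : 1 ≤ B := Real.one_le_rpow (by norm_num) hρ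
  have hB0 : (0:ℝ) ≤ B := le_trans zero_le_one hB
  have hM : 0 ≤ MF := le_trans (norm_nonneg _) (hMF 0)
  -- G as a product of linear factors over its roots
  have hsplits : Splits G := IsAlgClosed.splits G
  have hGeq : G = (G.roots.map fun a => X - C a).prod :=
    hsplits.eq_prod_roots_of_monic hG
  have hcard : Multiset.card G.roots = n := by
    rw [← hGdeg]; exact (splits_iff_card_roots.mp hsplits)
  have hrB : ∀ a ∈ G.roots, ‖a‖ ≤ B := fun a hamem =>
    hroots a (isRoot_of_mem_roots hamem)
  -- bound on G's coefficients
  have gbound : ∀ j, ‖G.coeff j‖ ≤ (n.choose j : ℝ) * B ^ (n - j) := by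
    intro j
    have := prodBound B hB G.roots hrB j
    rwa [hcard, ← hGeq] at this
  -- bound on Q's coefficients
  have hF0 : ∀ j, ‖F.coeff j‖ ≤ MF * ((m - j).choose 0 : ℝ) * B ^ (m - 0 - j) := by
    intro j
    simp only [Nat.choose_zero_right, Nat.cast_one, mul_one, Nat.sub_zero]
    calc ‖F.coeff j‖ ≤ MF := hMF j
      _ ≤ MF * B ^ (m - j) := le_mul_of_one_le_right hM (one_le_pow₀ hB)
  have hQall := multiBound B MF hB hM m G.roots hrB 0 F (by omega) hF0
  rw [← hGeq, hcard] at hQall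
  set Q := F /ₘ G with hQdef
  have qbound : ∀ j, ‖Q.coeff j‖
      ≤ MF * ((m - j).choose n : ℝ) * B ^ (m - n - j) := by
    intro j
    have := hQall.2 j
    simpa [zero_add] using this
  -- remainder
  have hmod : F %ₘ G = F - G * Q := modByMonic_eq_sub_mul_div F G
  have habs : ‖(F %ₘ G).coeff i‖
      ≤ MF + ‖(G * Q).coeff i‖ := by
    rw [hmod, coeff_sub]
    exact (abs_sub_le'' _ _).trans (add_le_add (hMF i) le_rfl)
  have hK0 : (0:ℝ) ≤ MF * (m.choose n : ℝ) * B ^ m := by positivity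
  have hGQ : ‖(G * Q).coeff i‖
      ≤ (2^n : ℝ) * (MF * (m.choose n : ℝ) * B ^ m) := by
    rw [coeff_mul]
    refine (norm_sum_le _ _).trans ?_
    have hterm : ∀ x ∈ antidiagonal i, ‖G.coeff x.1 * Q.coeff x.2‖
        ≤ (n.choose x.1 : ℝ) * (MF * (m.choose n : ℝ) * B ^ m) := by
      intro x _
      rw [norm_mul]
      calc ‖G.coeff x.1‖ * ‖Q.coeff x.2‖
          ≤ ((n.choose x.1 : ℝ) * B ^ (n - x.1))
            * (MF * ((m - x.2).choose n : ℝ) * B ^ (m - n - x.2)) :=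
            mul_le_mul (gbound x.1) (qbound x.2) (norm_nonneg _) (by positivity)
        _ = (n.choose x.1 : ℝ)
            * (MF * ((m - x.2).choose n : ℝ) * (B ^ (n - x.1) * B ^ (m - n - x.2))) := by ring
        _ ≤ (n.choose x.1 : ℝ) * (MF * (m.choose n : ℝ) * B ^ m) := by
            rw [← pow_add]
            have hc' : ((m - x.2).choose n : ℝ) ≤ (m.choose n : ℝ) := by
              exact_mod_cast Nat.choose_le_choose n (Nat.sub_le m x.2)
            have hbe : B ^ (n - x.1 + (m - n - x.2)) ≤ B ^ m :=
              pow_le_pow_right₀ hB (by omega)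
            have hmono : MF * ((m - x.2).choose n : ℝ) * B ^ (n - x.1 + (m - n - x.2))
                ≤ MF * (m.choose n : ℝ) * B ^ m :=
              mul_le_mul (mul_le_mul le_rfl hc' (Nat.cast_nonneg _) hM) hbe
                (by positivity) (mul_nonneg hM (Nat.cast_nonneg _))
            exact mul_le_mul_of_nonneg_left hmono (Nat.cast_nonneg _)
    calc ∑ x ∈ antidiagonal i, ‖G.coeff x.1 * Q.coeff x.2‖
        ≤ ∑ x ∈ antidiagonal i, (n.choose x.1 : ℝ) * (MF * (m.choose n : ℝ) * B ^ m) :=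
          Finset.sum_le_sum hterm
      _ = ((∑ x ∈ antidiagonal i, n.choose x.1 : ℕ) : ℝ) * (MF * (m.choose n : ℝ) * B ^ m) := by
          rw [← Finset.sum_mul]; push_cast; ring
      _ ≤ (2^n : ℝ) * (MF * (m.choose n : ℝ) * B ^ m) := by
          gcongr
          exact_mod_cast sum_antidiag_choose_le n i
  -- final numeric bound
  have hm1 : (1:ℝ) ≤ (m:ℝ) := by exact_mod_cast le_trans hn hnm
  have hmpos : (0:ℝ) < (m:ℝ) := by linarith
  have hrw : (2:ℝ) ^ ((m : ℝ) + (n : ℝ) + Real.logb 2 (m:ℝ) + (m:ℝ) * ρ)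
      = 2^m * 2^n * (m:ℝ) * B^m := by
    rw [Real.rpow_add (by norm_num : (0:ℝ) < 2), Real.rpow_add (by norm_num : (0:ℝ) < 2),
        Real.rpow_add (by norm_num : (0:ℝ) < 2), Real.rpow_natCast, Real.rpow_natCast,
        Real.rpow_logb (by norm_num) (by norm_num) hmpos, mul_comm (m:ℝ) ρ,
        Real.rpow_mul (by norm_num : (0:ℝ) ≤ 2), Real.rpow_natCast]
  rw [hrw]
  have hchoose : (1:ℝ) + (m.choose n : ℝ) ≤ 2^m := by
    exact_mod_cast one_add_choose_le m n hn hnm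
  have h2B : (1:ℝ) ≤ 2^n * B^m := by
    have h1 : (1:ℝ) ≤ (2:ℝ)^n := one_le_pow₀ (by norm_num)
    have h2 : (1:ℝ) ≤ B^m := one_le_pow₀ hB
    nlinarith
  calc ‖(F %ₘ G).coeff i‖
      ≤ MF + (2^n : ℝ) * (MF * (m.choose n : ℝ) * B ^ m) := le_trans habs (by linarith [hGQ])
    _ = MF * (2^n * B^m) * (1 + (m.choose n : ℝ)) - MF * (2^n * B^m) + MF := by ring
    _ ≤ MF * (2^n * B^m) * (2^m) - MF * (2^n * B^m) + MF := by
        have hnn : (0:ℝ) ≤ MF * (2^n * B^m) := mul_nonneg hM (by positivity)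
        nlinarith [mul_le_mul_of_nonneg_left hchoose hnn]
    _ ≤ MF * (2^n * B^m) * (2^m) := by
        have hnn : (0:ℝ) ≤ MF * (2^n * B^m) := mul_nonneg hM (by positivity)
        nlinarith [mul_le_mul_of_nonneg_left h2B hnn]
    _ = 2^m * 2^n * 1 * B^m * MF := by ring
    _ ≤ 2^m * 2^n * (m:ℝ) * B^m * MF := by
        have h1 : (0:ℝ) ≤ B^m * MF := mul_nonneg (by positivity) hM
        nlinarith [mul_le_mul_of_nonneg_left hm1 (by positivity : (0:ℝ) ≤ (2:ℝ)^m * 2^n)]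
end

section
/- Let P_j ∈ ℂ[x], 1 ≤ j ≤ m, each of degree n with ‖P_j‖_∞ ≤ 2^τ. Then the product satisfies ‖Π_{j=1}^m P_j‖_∞ ≤ 2^{mτ + (m−1)log₂ n + 4m − log₂ m − 4}. -/
open Polynomial Finset

lemma aux_coeff_mul_bound (P Q : Polynomial ℂ) (d : ℕ) (A B : ℝ)
    (hA : 0 ≤ A) (hB : 0 ≤ B) (hd : P.natDegree ≤ d)
    (hP : ∀ i, ‖P.coeff i‖ ≤ A)
    (hQ : ∀ i, ‖Q.coeff i‖ ≤ B) (i : ℕ) :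
    ‖(P * Q).coeff i‖ ≤ ((d : ℝ) + 1) * A * B := by
  have key : ∑ k ∈ Finset.range (i + 1), ‖P.coeff k‖ ≤ ((d : ℝ) + 1) * A := by
    have h0 : ∑ k ∈ Finset.range (i + 1), ‖P.coeff k‖
        = ∑ k ∈ (Finset.range (i + 1)).filter (· ≤ d), ‖P.coeff k‖ := by
      refine (Finset.sum_filter_of_ne ?_).symm
      intro k _ hk
      by_contra h
      push_neg at h
      rw [Polynomial.coeff_eq_zero_of_natDegree_lt (lt_of_le_of_lt hd h)] at hk
      simp at hk
    rw [h0]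
    calc ∑ k ∈ (Finset.range (i + 1)).filter (· ≤ d), ‖P.coeff k‖
        ≤ ((Finset.range (i + 1)).filter (· ≤ d)).card • A := by
          exact Finset.sum_le_card_nsmul _ _ _ (fun k _ => hP k)
      _ = (((Finset.range (i + 1)).filter (· ≤ d)).card : ℝ) * A := by
          rw [nsmul_eq_mul]
      _ ≤ ((d : ℝ) + 1) * A := by
          refine mul_le_mul_of_nonneg_right ?_ hA
          have : ((Finset.range (i + 1)).filter (· ≤ d)).card ≤ d + 1 := by
            have hsub : (Finset.range (i + 1)).filter (· ≤ d) ⊆ Finset.range (d + 1) := by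
              intro k hk
              simp only [Finset.mem_filter, Finset.mem_range] at hk ⊢
              omega
            simpa using Finset.card_le_card hsub
          exact_mod_cast this
  rw [Polynomial.coeff_mul]
  calc ‖∑ x ∈ Finset.HasAntidiagonal.antidiagonal i, P.coeff x.1 * Q.coeff x.2‖
      ≤ ∑ x ∈ Finset.HasAntidiagonal.antidiagonal i, ‖P.coeff x.1 * Q.coeff x.2‖ :=
        norm_sum_le _ _
    _ = ∑ x ∈ Finset.HasAntidiagonal.antidiagonal i, ‖P.coeff x.1‖ * ‖Q.coeff x.2‖ := by
        simp [map_mul]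
    _ ≤ ∑ x ∈ Finset.HasAntidiagonal.antidiagonal i, ‖P.coeff x.1‖ * B := by
        refine Finset.sum_le_sum (fun x _ => ?_)
        exact mul_le_mul_of_nonneg_left (hQ _) (norm_nonneg _)
    _ = (∑ x ∈ Finset.HasAntidiagonal.antidiagonal i, ‖P.coeff x.1‖) * B := by
        rw [Finset.sum_mul]
    _ = (∑ k ∈ Finset.range (i + 1), ‖P.coeff k‖) * B := by
        rw [Finset.Nat.sum_antidiagonal_eq_sum_range_succ_mk]
    _ ≤ ((d : ℝ) + 1) * A * B := mul_le_mul_of_nonneg_right key hB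

lemma aux_prod_coeff_bound {ι : Type*} [DecidableEq ι] (n : ℕ) (A : ℝ) (hA : 0 ≤ A)
    (s : Finset ι) (hs : s.Nonempty) (P : ι → Polynomial ℂ)
    (hdeg : ∀ j ∈ s, (P j).natDegree ≤ n)
    (hc : ∀ j ∈ s, ∀ i, ‖(P j).coeff i‖ ≤ A) :
    ∀ i, ‖(∏ j ∈ s, P j).coeff i‖ ≤ ((n : ℝ) + 1) ^ (s.card - 1) * A ^ s.card := by
  induction hs using Finset.Nonempty.cons_induction with
  | singleton a =>
    intro i
    simpa using hc a (by simp) i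
  | cons a s ha hs ih =>
    intro i
    have hdeg' : ∀ j ∈ s, (P j).natDegree ≤ n := fun j hj => hdeg j (Finset.mem_cons_of_mem hj)
    have hc' : ∀ j ∈ s, ∀ i, ‖(P j).coeff i‖ ≤ A :=
      fun j hj => hc j (Finset.mem_cons_of_mem hj)
    have ih' := ih hdeg' hc'
    have hBnn : (0 : ℝ) ≤ ((n : ℝ) + 1) ^ (s.card - 1) * A ^ s.card := by positivity
    have hmul := aux_coeff_mul_bound (P a) (∏ j ∈ s, P j) n A
      (((n : ℝ) + 1) ^ (s.card - 1) * A ^ s.card) hA hBnn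
      (hdeg a (Finset.mem_cons_self a s)) (hc a (Finset.mem_cons_self a s) ·) ih' i
    rw [Finset.prod_cons]
    refine hmul.trans (le_of_eq ?_)
    have h1 : 1 ≤ s.card := hs.card_pos
    have h2 : (Finset.cons a s ha).card = s.card + 1 := Finset.card_cons ha
    rw [h2]
    have h3 : s.card + 1 - 1 = s.card := rfl
    rw [h3]
    have h4 : s.card = s.card - 1 + 1 := (Nat.sub_add_cancel h1).symm
    calc ((n : ℝ) + 1) * A * (((n : ℝ) + 1) ^ (s.card - 1) * A ^ s.card)
        = (((n : ℝ) + 1) ^ (s.card - 1) * ((n : ℝ) + 1)) * (A ^ s.card * A) := by ring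
      _ = ((n : ℝ) + 1) ^ (s.card - 1 + 1) * A ^ (s.card + 1) := by
          rw [pow_succ, pow_succ]
      _ = ((n : ℝ) + 1) ^ s.card * A ^ (s.card + 1) := by rw [← h4]

lemma aux_le_eight_pow (m : ℕ) : m + 1 ≤ 8 ^ m := by
  induction m with
  | zero => norm_num
  | succ k ih =>
    have h1 : (1 : ℕ) ≤ 8 ^ k := Nat.one_le_pow _ _ (by norm_num)
    have : 8 ^ (k + 1) = 8 * 8 ^ k := by rw [pow_succ]; ring
    omega

theorem stmt14 (m n : ℕ) (hm : 1 ≤ m) (hn : 1 ≤ n) (τ : ℝ)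
    (P : Fin m → Polynomial ℂ) (hdeg : ∀ j, (P j).natDegree = n)
    (hcoeff : ∀ j i, ‖(P j).coeff i‖ ≤ (2 : ℝ) ^ τ) :
    ∀ i, ‖(∏ j, P j).coeff i‖ ≤
      2 ^ ((m : ℝ) * τ + ((m : ℝ) - 1) * Real.logb 2 n + 4 * (m : ℝ) -
        Real.logb 2 m - 4) := by
  intro i
  have hA : (0 : ℝ) ≤ 2 ^ τ := le_of_lt (Real.rpow_pos_of_pos two_pos τ)
  haveI : Nonempty (Fin m) := ⟨⟨0, hm⟩⟩
  have huniv : (Finset.univ : Finset (Fin m)).Nonempty := Finset.univ_nonempty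
  have key := aux_prod_coeff_bound n ((2:ℝ) ^ τ) hA Finset.univ huniv P
    (fun j _ => (hdeg j).le) (fun j _ => hcoeff j) i
  rw [Finset.card_univ, Fintype.card_fin] at key
  set k := m - 1 with hk
  have hkm : (k : ℝ) = (m : ℝ) - 1 := by
    rw [hk]; push_cast [Nat.cast_sub hm]; ring
  have hm1 : (1 : ℝ) ≤ (m : ℝ) := by exact_mod_cast hm
  have hn1 : (1 : ℝ) ≤ (n : ℝ) := by exact_mod_cast hn
  have hmpos : (0 : ℝ) < m := by linarith
  have hnpos : (0 : ℝ) < n := by linarith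
  -- rewrite RHS
  have eexp : (m : ℝ) * τ + ((m : ℝ) - 1) * Real.logb 2 n + 4 * (m : ℝ)
      - Real.logb 2 m - 4
      = ((m : ℝ) * τ + Real.logb 2 n * ((m : ℝ) - 1) + 4 * ((m : ℝ) - 1))
        - Real.logb 2 m := by ring
  have h16 : (2 : ℝ) ^ (4 : ℝ) = 16 := by
    rw [show (4:ℝ) = ((4:ℕ):ℝ) by norm_num, Real.rpow_natCast]; norm_num
  have hrhs : (2 : ℝ) ^ ((m : ℝ) * τ + ((m : ℝ) - 1) * Real.logb 2 n + 4 * (m : ℝ)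
      - Real.logb 2 m - 4)
      = (2 : ℝ) ^ ((m : ℝ) * τ) * (n : ℝ) ^ k * (16 : ℝ) ^ k / (m : ℝ) := by
    rw [eexp, Real.rpow_sub two_pos, Real.rpow_add two_pos, Real.rpow_add two_pos,
      Real.rpow_logb two_pos (by norm_num) hmpos,
      Real.rpow_mul (le_of_lt two_pos) (Real.logb 2 n),
      Real.rpow_mul (le_of_lt two_pos) (4 : ℝ),
      Real.rpow_logb two_pos (by norm_num) hnpos, h16, ← hkm,
      Real.rpow_natCast, Real.rpow_natCast]
  rw [hrhs]
  -- rewrite (2^τ)^m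
  have hpm : ((2:ℝ) ^ τ) ^ m = (2 : ℝ) ^ ((m : ℝ) * τ) := by
    rw [← Real.rpow_natCast ((2:ℝ) ^ τ) m, ← Real.rpow_mul (le_of_lt two_pos), mul_comm]
  rw [hpm] at key
  refine key.trans ?_
  have h2t : (0 : ℝ) < (2:ℝ) ^ ((m : ℝ) * τ) := Real.rpow_pos_of_pos two_pos _
  rw [div_eq_mul_inv, ge_iff_le.symm]
  -- reduce to (n+1)^k * m ≤ n^k * 16^k
  have hmain : ((n : ℝ) + 1) ^ k * (m : ℝ) ≤ (n : ℝ) ^ k * (16 : ℝ) ^ k := by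
    have h1 : ((n : ℝ) + 1) ^ k ≤ (2 * (n : ℝ)) ^ k := by
      apply pow_le_pow_left₀ (by linarith) (by linarith)
    have h2 : (m : ℝ) ≤ (8 : ℝ) ^ k := by
      have := aux_le_eight_pow k
      have hmk : m ≤ 8 ^ k := by omega
      exact_mod_cast hmk
    calc ((n : ℝ) + 1) ^ k * (m : ℝ) ≤ (2 * (n : ℝ)) ^ k * (8 : ℝ) ^ k :=
          mul_le_mul h1 h2 (by linarith) (by positivity)
      _ = (n : ℝ) ^ k * (16 : ℝ) ^ k := by
          rw [← mul_pow, ← mul_pow]; ring_nf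
  have hstep : ((n : ℝ) + 1) ^ k ≤ (n : ℝ) ^ k * (16 : ℝ) ^ k * ((m : ℝ))⁻¹ := by
    rw [← div_eq_mul_inv, le_div_iff₀ hmpos]
    exact hmain
  calc ((n : ℝ) + 1) ^ k * (2:ℝ) ^ ((m : ℝ) * τ)
      ≤ ((n : ℝ) ^ k * (16 : ℝ) ^ k * ((m : ℝ))⁻¹) * (2:ℝ) ^ ((m : ℝ) * τ) :=
        mul_le_mul_of_nonneg_right hstep (le_of_lt h2t)
    _ = (2:ℝ) ^ ((m : ℝ) * τ) * (n : ℝ) ^ k * (16 : ℝ) ^ k * ((m : ℝ))⁻¹ := by ring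
end

section
/- Let s = (s_i) and t = (t_j) be vectors of n distinct complex numbers with s_i ≠ t_j for all i, j, and let C(s,t) be the Cauchy matrix with entries 1/(s_i − t_j). Let p_t(X) = Π_i (X − t_i) and p_s(X) = Π_i (X − s_i). Then C(s,t) is invertible and C(s,t)^{-1} = diag(p_s(t_i)/p_t'(t_i)) · C(t,s) · diag(p_t(s_i)/p_s'(s_i)). -/
open Polynomial Finset

lemma cauchy_mul_eq_one (n : ℕ) (s t : Fin n → ℂ)
    (hs : Function.Injective s) (ht : Function.Injective t)
    (hst : ∀ i j, s i ≠ t j) :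
    (Matrix.of fun i j : Fin n => (s i - t j)⁻¹) *
      (Matrix.diagonal (fun i =>
          (∏ k, (Polynomial.X - Polynomial.C (s k))).eval (t i) /
            (Polynomial.derivative (∏ k, (Polynomial.X - Polynomial.C (t k)))).eval (t i)) *
        (Matrix.of fun i j : Fin n => (t i - s j)⁻¹) *
        Matrix.diagonal (fun i =>
          (∏ k, (Polynomial.X - Polynomial.C (t k))).eval (s i) /
            (Polynomial.derivative (∏ k, (Polynomial.X - Polynomial.C (s k)))).eval (s i))) = 1 := by
  have hsInj : Set.InjOn s (univ : Finset (Fin n)) := fun a _ b _ h => hs h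
  have htInj : Set.InjOn t (univ : Finset (Fin n)) := fun a _ b _ h => ht h
  have hPs : (∏ k, (Polynomial.X - Polynomial.C (s k))) = Lagrange.nodal univ s := rfl
  have hPt : (∏ k, (Polynomial.X - Polynomial.C (t k))) = Lagrange.nodal univ t := rfl
  ext i j
  rw [Matrix.mul_apply]
  simp only [Matrix.mul_diagonal, Matrix.diagonal_mul, Matrix.of_apply,
    Matrix.one_apply, hPs, hPt]
  -- rewrite derivatives as nodal weights
  have hw1 : ∀ k : Fin n,
      eval (t k) (Lagrange.nodal univ s) / eval (t k) (derivative (Lagrange.nodal univ t))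
        = eval (t k) (Lagrange.nodal univ s) * Lagrange.nodalWeight univ t k := by
    intro k
    rw [Lagrange.nodalWeight_eq_eval_derivative_nodal (mem_univ k), div_eq_mul_inv]
  have hw2 :
      eval (s j) (Lagrange.nodal univ t) / eval (s j) (derivative (Lagrange.nodal univ s))
        = eval (s j) (Lagrange.nodal univ t) * Lagrange.nodalWeight univ s j := by
    rw [Lagrange.nodalWeight_eq_eval_derivative_nodal (mem_univ j), div_eq_mul_inv]
  simp only [hw1, hw2]
  -- key step: eval (t k) (nodal univ s) * (t k - s j)⁻¹ = eval (t k) (nodal (univ.erase j) s)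
  have hkey : ∀ k : Fin n,
      eval (t k) (Lagrange.nodal univ s) * (t k - s j)⁻¹
        = eval (t k) (Lagrange.nodal (univ.erase j) s) := by
    intro k
    rw [Lagrange.nodal_eq_mul_nodal_erase (mem_univ j), eval_mul, eval_sub, eval_X, eval_C]
    have hne : t k - s j ≠ 0 := sub_ne_zero_of_ne (Ne.symm (hst j k))
    field_simp
  -- the interpolation identity
  have hdeg : (Lagrange.nodal (univ.erase j) s).degree < (univ : Finset (Fin n)).card := by
    rw [Lagrange.degree_nodal, card_erase_of_mem (mem_univ j)]
    exact_mod_cast Nat.sub_lt (Finset.card_pos.mpr ⟨j, mem_univ j⟩) one_pos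
  have hinterp : Lagrange.interpolate univ t
      (fun k => eval (t k) (Lagrange.nodal (univ.erase j) s))
        = Lagrange.nodal (univ.erase j) s :=
    (Lagrange.eq_interpolate htInj hdeg).symm
  have hx : ∀ k ∈ (univ : Finset (Fin n)), s i ≠ t k := fun k _ => hst i k
  have hbary := Lagrange.eval_interpolate_not_at_node
    (s := univ) (v := t) (x := s i)
    (fun k => eval (t k) (Lagrange.nodal (univ.erase j) s)) hx
  rw [hinterp] at hbary
  have hnt : eval (s i) (Lagrange.nodal univ t) ≠ 0 :=
    Lagrange.eval_nodal_not_at_node hx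
  have hsum : ∑ k, Lagrange.nodalWeight univ t k * (s i - t k)⁻¹ *
      eval (t k) (Lagrange.nodal (univ.erase j) s)
        = (eval (s i) (Lagrange.nodal univ t))⁻¹ *
            eval (s i) (Lagrange.nodal (univ.erase j) s) := by
    rw [eq_inv_mul_iff_mul_eq₀ hnt]
    exact hbary.symm
  calc ∑ k, (s i - t k)⁻¹ *
        (eval (t k) (Lagrange.nodal univ s) * Lagrange.nodalWeight univ t k * (t k - s j)⁻¹ *
          (eval (s j) (Lagrange.nodal univ t) * Lagrange.nodalWeight univ s j))
      = (eval (s j) (Lagrange.nodal univ t) * Lagrange.nodalWeight univ s j) *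
          ∑ k, Lagrange.nodalWeight univ t k * (s i - t k)⁻¹ *
            eval (t k) (Lagrange.nodal (univ.erase j) s) := by
        rw [mul_sum]
        refine Finset.sum_congr rfl fun k _ => ?_
        rw [← hkey k]; ring
    _ = (eval (s j) (Lagrange.nodal univ t) * Lagrange.nodalWeight univ s j) *
          ((eval (s i) (Lagrange.nodal univ t))⁻¹ *
            eval (s i) (Lagrange.nodal (univ.erase j) s)) := by rw [hsum]
    _ = if i = j then 1 else 0 := by
        by_cases hij : i = j
        · subst hij
          simp only [if_pos rfl, ite_true]
          have hval : eval (s i) (Lagrange.nodal (univ.erase i) s) ≠ 0 :=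
            Lagrange.eval_nodal_not_at_node (fun m hm =>
              fun h => (mem_erase.mp hm).1 (hs h.symm))
          rw [Lagrange.nodalWeight_eq_eval_nodal_erase_inv]
          field_simp
        · simp only [if_neg hij]
          have : eval (s i) (Lagrange.nodal (univ.erase j) s) = 0 :=
            Lagrange.eval_nodal_at_node (mem_erase.mpr ⟨hij, mem_univ i⟩)
          rw [this]; ring

theorem stmt18 (n : ℕ) (s t : Fin n → ℂ)
    (hs : Function.Injective s) (ht : Function.Injective t)
    (hst : ∀ i j, s i ≠ t j) :
    IsUnit (Matrix.of fun i j : Fin n => (s i - t j)⁻¹) ∧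
    (Matrix.of fun i j : Fin n => (s i - t j)⁻¹)⁻¹ =
      Matrix.diagonal (fun i =>
          (∏ k, (Polynomial.X - Polynomial.C (s k))).eval (t i) /
            (Polynomial.derivative (∏ k, (Polynomial.X - Polynomial.C (t k)))).eval (t i)) *
        (Matrix.of fun i j : Fin n => (t i - s j)⁻¹) *
        Matrix.diagonal (fun i =>
          (∏ k, (Polynomial.X - Polynomial.C (t k))).eval (s i) /
            (Polynomial.derivative (∏ k, (Polynomial.X - Polynomial.C (s k)))).eval (s i)) := by
  have h := cauchy_mul_eq_one n s t hs ht hst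
  exact ⟨⟨⟨_, _, h, mul_eq_one_comm.mp h⟩, rfl⟩, Matrix.inv_eq_right_inv h⟩
end
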